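/- Let G be a comonad on a category E and (P, σ) an oplax morphism of comonads G → G, with Q : E_G → E_G the corresponding lifted functor satisfying U_G ∘ Q = P ∘ U_G. Then for any initial P-algebra (W, s) in E, there exists a unique initial Q-algebra (W', s') in E_G such that U_G W' = W and U_G s' = s. -/

import Mathlib

open CategoryTheory CategoryTheory.Limits

universe v u

variable {E : Type u} [Category.{v} E]

lemma coalg_ext {G : Comonad E} {A B : G.Coalgebra} (h1 : A.A = B.A) (h2 : HEq A.a B.a) :
    A = B := by
  cases A; cases B; cases h1; cases h2; rfl

lemma coalg_eqToHom_f {G : Comonad E} {A B : G.Coalgebra} (h : A = B) :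
    (eqToHom h).f = eqToHom (congrArg Comonad.Coalgebra.A h) := by
  subst h; rfl

/-- `(S, σ)` is an oplax morphism of comonads `G → H`. -/
def IsOplaxMorphism {F : Type*} [Category F] (G : Comonad E) (H : Comonad F) (S : E ⥤ F)
    (σ : G.toFunctor ⋙ S ⟶ S ⋙ H.toFunctor) : Prop :=
  (∀ X : E, σ.app X ≫ H.ε.app (S.obj X) = S.map (G.ε.app X)) ∧
  (∀ X : E, σ.app X ≫ H.δ.app (S.obj X) =
      S.map (G.δ.app X) ≫ σ.app (G.obj X) ≫ H.map (σ.app X))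

/-- given an oplax morphism of comonads `(P, σ) : G → G` with lifted endofunctor
`Q` on `E_G` (so `U_G ∘ Q = P ∘ U_G` and `Q(A, α) = (PA, σ A ∘ Pα)`), every initial
`P`-algebra `(W, s)` in `E` lifts to a unique initial `Q`-algebra `(W', s')` in `E_G` with
`U_G W' = W` and `U_G s' = s`. -/
theorem initial_algebra_lifts_to_coalgebras (G : Comonad E) (P : E ⥤ E)
    (σ : G.toFunctor ⋙ P ⟶ P ⋙ G.toFunctor) (hσ : IsOplaxMorphism G G P σ)
    (Q : G.Coalgebra ⥤ G.Coalgebra) (hQ : Q ⋙ G.forget = G.forget ⋙ P)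
    (hQobj : ∀ A : G.Coalgebra,
      (Q.obj A).A = P.obj A.A ∧ HEq (Q.obj A).a (P.map A.a ≫ σ.app A.A))
    (W : Endofunctor.Algebra P) (hW : Nonempty (IsInitial W)) :
    ∃! W' : Endofunctor.Algebra Q,
      (W'.a.A = W.a ∧ HEq W'.str.f W.str) ∧ Nonempty (IsInitial W') := by
  obtain ⟨hI⟩ := hW
  obtain ⟨hσ1, hσ2⟩ := hσ
  have σnat : ∀ {X Y : E} (f : X ⟶ Y),
      P.map (G.map f) ≫ σ.app Y = σ.app X ≫ G.map (P.map f) := fun f => σ.naturality f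
  have εnat : ∀ {X Y : E} (f : X ⟶ Y),
      G.map f ≫ G.ε.app Y = G.ε.app X ≫ f := fun f => by simpa using G.ε.naturality f
  have δnat : ∀ {X Y : E} (f : X ⟶ Y),
      G.map f ≫ G.δ.app Y = G.δ.app X ≫ G.map (G.map f) := fun f => by
    simpa using G.δ.naturality f
  -- the lifting of `P` on coalgebras, described explicitly
  let L : G.Coalgebra → G.Coalgebra := fun B =>
    { A := P.obj B.A
      a := P.map B.a ≫ σ.app B.A
      counit := by
        rw [Category.assoc, hσ1, ← P.map_comp, B.counit, P.map_id]
      coassoc := by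
        simp only [Functor.map_comp, Category.assoc]
        rw [hσ2, ← Functor.map_comp_assoc, B.coassoc, Functor.map_comp_assoc,
          reassoc_of% (σnat B.a)] }
  have hQL : ∀ B : G.Coalgebra, Q.obj B = L B := fun B =>
    coalg_ext (hQobj B).1 (hQobj B).2
  -- the coalgebra structure on `W.a`
  let GW : Endofunctor.Algebra P := ⟨G.obj W.a, σ.app W.a ≫ G.map W.str⟩
  let α : W.a ⟶ G.obj W.a := (hI.to GW).f
  have hα : P.map α ≫ σ.app W.a ≫ G.map W.str = W.str ≫ α := (hI.to GW).h
  have hcounit : α ≫ G.ε.app W.a = 𝟙 W.a := by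
    have h1 : P.map (α ≫ G.ε.app W.a) ≫ W.str = W.str ≫ (α ≫ G.ε.app W.a) := by
      simp only [Functor.map_comp, Category.assoc]
      rw [← hσ1 W.a, Category.assoc, ← εnat W.str, reassoc_of% hα]
    have h2 := hI.hom_ext (⟨α ≫ G.ε.app W.a, h1⟩ : W ⟶ W) (𝟙 W)
    simpa using congrArg Endofunctor.Algebra.Hom.f h2
  have hcoassoc : α ≫ G.δ.app W.a = α ≫ G.map α := by
    let GGW : Endofunctor.Algebra P :=
      ⟨G.obj (G.obj W.a), σ.app (G.obj W.a) ≫ G.map (σ.app W.a ≫ G.map W.str)⟩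
    have hσ2' : ∀ (X : E) {Z : E} (h : G.obj (G.obj (P.obj X)) ⟶ Z),
        σ.app X ≫ G.δ.app (P.obj X) ≫ h =
          P.map (G.δ.app X) ≫ σ.app (G.obj X) ≫ G.map (σ.app X) ≫ h := fun X Z h => by
      rw [← Category.assoc, hσ2]; simp only [Category.assoc]
    have h1 : P.map (α ≫ G.δ.app W.a) ≫ GGW.str = W.str ≫ (α ≫ G.δ.app W.a) := by
      show P.map (α ≫ G.δ.app W.a) ≫ σ.app (G.obj W.a) ≫ G.map (σ.app W.a ≫ G.map W.str) = _
      simp only [Functor.map_comp, Category.assoc]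
      rw [← hσ2' W.a, ← δnat W.str, reassoc_of% hα]
    have h2 : P.map (α ≫ G.map α) ≫ GGW.str = W.str ≫ (α ≫ G.map α) := by
      show P.map (α ≫ G.map α) ≫ σ.app (G.obj W.a) ≫ G.map (σ.app W.a ≫ G.map W.str) = _
      simp only [Functor.map_comp, Category.assoc]
      rw [reassoc_of% (σnat α), ← G.map_comp, ← G.map_comp, ← Category.assoc (P.map α), Category.assoc (P.map α), hα,
        G.map_comp, reassoc_of% hα]
    have h3 := hI.hom_ext (⟨α ≫ G.δ.app W.a, h1⟩ : W ⟶ GGW) (⟨α ≫ G.map α, h2⟩ : W ⟶ GGW)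
    exact congrArg Endofunctor.Algebra.Hom.f h3
  let Wc : G.Coalgebra := ⟨W.a, α, hcounit, hcoassoc⟩
  have hstr0 : (L Wc).a ≫ G.map W.str = W.str ≫ Wc.a := by
    show (P.map α ≫ σ.app W.a) ≫ G.map W.str = W.str ≫ α
    rw [Category.assoc]; exact hα
  let str0 : L Wc ⟶ Wc := ⟨W.str, hstr0⟩
  let W' : Endofunctor.Algebra Q := ⟨Wc, eqToHom (hQL Wc) ≫ str0⟩
  have hW'f : W'.str.f = eqToHom (congrArg Comonad.Coalgebra.A (hQL Wc)) ≫ W.str := by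
    show (eqToHom (hQL Wc) ≫ str0).f = _
    rw [Comonad.Coalgebra.comp_f, coalg_eqToHom_f]
  -- initiality of W'
  have key : ∀ A : Endofunctor.Algebra Q, ∃ m : W' ⟶ A, ∀ m' : W' ⟶ A, m' = m := by
    intro A
    have hcarrier : (Q.obj A.a).A = P.obj A.a.A := (hQobj A.a).1
    let pstr : P.obj A.a.A ⟶ A.a.A := eqToHom hcarrier.symm ≫ A.str.f
    let PA : Endofunctor.Algebra P := ⟨A.a.A, pstr⟩
    let f := (hI.to PA).f
    have hf : P.map f ≫ pstr = W.str ≫ f := (hI.to PA).h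
    have hcomm : P.map A.a.a ≫ σ.app A.a.A ≫ G.map pstr = pstr ≫ A.a.a := by
      have tf : (eqToHom (hQL A.a).symm ≫ A.str).f = pstr := by
        rw [Comonad.Coalgebra.comp_f, coalg_eqToHom_f]
      have t := (eqToHom (hQL A.a).symm ≫ A.str).h
      rw [tf] at t
      have t' : (P.map A.a.a ≫ σ.app A.a.A) ≫ G.map pstr = pstr ≫ A.a.a := t
      rw [Category.assoc] at t'
      exact t'
    let GA : Endofunctor.Algebra P := ⟨G.obj A.a.A, σ.app A.a.A ≫ G.map pstr⟩
    have h1 : P.map (α ≫ G.map f) ≫ GA.str = W.str ≫ (α ≫ G.map f) := by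
      show P.map (α ≫ G.map f) ≫ σ.app A.a.A ≫ G.map pstr = _
      simp only [Functor.map_comp, Category.assoc]
      rw [reassoc_of% (σnat f), ← G.map_comp, hf, G.map_comp, reassoc_of% hα]
    have h2 : P.map (f ≫ A.a.a) ≫ GA.str = W.str ≫ (f ≫ A.a.a) := by
      show P.map (f ≫ A.a.a) ≫ σ.app A.a.A ≫ G.map pstr = _
      simp only [Functor.map_comp, Category.assoc]
      rw [hcomm, reassoc_of% hf]
    have hfc : Wc.a ≫ G.map f = f ≫ A.a.a := by
      have h3 := hI.hom_ext (⟨α ≫ G.map f, h1⟩ : W ⟶ GA) (⟨f ≫ A.a.a, h2⟩ : W ⟶ GA)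
      exact congrArg Endofunctor.Algebra.Hom.f h3
    let fc : Wc ⟶ A.a := ⟨f, hfc⟩
    have epstr : eqToHom (Functor.congr_obj hQ A.a).symm ≫ A.str.f = pstr := rfl
    have hcompat : Q.map fc ≫ A.str = W'.str ≫ fc := by
      apply Comonad.Coalgebra.Hom.ext' _ _ _ _
      rw [Comonad.Coalgebra.comp_f, Comonad.Coalgebra.comp_f]
      have e' : (Q.map fc).f =
          eqToHom (Functor.congr_obj hQ Wc) ≫ P.map (G.forget.map fc) ≫ eqToHom (Functor.congr_obj hQ A.a).symm :=
        Functor.congr_hom hQ fc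
      rw [e', hW'f]
      exact ((Category.assoc _ _ _).trans (congrArg (fun x => eqToHom (Functor.congr_obj hQ Wc) ≫ x)
        ((Category.assoc _ _ _).trans ((congrArg (fun x => P.map f ≫ x) epstr).trans hf)))).trans
          (Category.assoc _ _ _).symm
    refine ⟨⟨fc, hcompat⟩, fun m' => ?_⟩
    have hm := congrArg Comonad.Coalgebra.Hom.f m'.h
    rw [Comonad.Coalgebra.comp_f, Comonad.Coalgebra.comp_f] at hm
    have e' : (Q.map m'.f).f =
        eqToHom (Functor.congr_obj hQ Wc) ≫ P.map (G.forget.map m'.f) ≫ eqToHom (Functor.congr_obj hQ A.a).symm :=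
      Functor.congr_hom hQ m'.f
    have hW'f2 : W'.str.f = eqToHom (Functor.congr_obj hQ Wc) ≫ W.str := hW'f
    rw [e', hW'f2] at hm
    have hm1 : eqToHom (Functor.congr_obj hQ Wc) ≫ (P.map m'.f.f ≫ pstr) =
        eqToHom (Functor.congr_obj hQ Wc) ≫ W.str ≫ m'.f.f :=
      ((Category.assoc _ _ _).trans (congrArg (fun x => eqToHom (Functor.congr_obj hQ Wc) ≫ x)
        (Category.assoc _ _ _))).symm.trans (hm.trans (Category.assoc _ _ _))
    have hm2 := (cancel_epi (eqToHom (Functor.congr_obj hQ Wc))).mp hm1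
    have h4 := hI.hom_ext (⟨m'.f.f, hm2⟩ : W ⟶ PA) (hI.to PA)
    have h5 : m'.f.f = f := congrArg Endofunctor.Algebra.Hom.f h4
    apply Endofunctor.Algebra.ext
    apply Comonad.Coalgebra.Hom.ext' _ _ _ _
    exact h5
  have init : IsInitial W' :=
    IsInitial.ofUniqueHom (fun A => (key A).choose) (fun A m => (key A).choose_spec m)
  refine ⟨W', ⟨⟨rfl, ?_⟩, ⟨init⟩⟩, ?_⟩
  · rw [hW'f]; exact eqToHom_comp_heq _ _
  · rintro ⟨B, st⟩ ⟨⟨h1, h2⟩, -⟩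
    obtain ⟨A'', a'', c'', co''⟩ := B
    dsimp at h1
    subst h1
    have hstf : st.f = eqToHom (hQobj ⟨W.a, a'', c'', co''⟩).1 ≫ W.str := by
      have h3 := (conj_eqToHom_iff_heq st.f W.str
        (hQobj (⟨W.a, a'', c'', co''⟩ : G.Coalgebra)).1 rfl).mpr h2
      simpa using h3
    have haeq : a'' = α := by
      have tf : (eqToHom (hQL ⟨W.a, a'', c'', co''⟩).symm ≫ st).f = W.str := by
        rw [Comonad.Coalgebra.comp_f, coalg_eqToHom_f, hstf, ← Category.assoc,
          eqToHom_trans, eqToHom_refl, Category.id_comp]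
      have t := (eqToHom (hQL ⟨W.a, a'', c'', co''⟩).symm ≫ st).h
      rw [tf] at t
      have t' : (P.map a'' ≫ σ.app W.a) ≫ G.map W.str = W.str ≫ a'' := t
      rw [Category.assoc] at t'
      have h4 := hI.hom_ext (⟨a'', t'⟩ : W ⟶ GW) (hI.to GW)
      exact congrArg Endofunctor.Algebra.Hom.f h4
    subst haeq
    have hst : st = W'.str := by
      apply Comonad.Coalgebra.Hom.ext' _ _ _ _
      rw [hstf, hW'f]
    rw [hst]
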